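/- arXiv:1806.02469 — 3 statements merged into one kernel-verified Lean document; each statement's English description precedes it below -/
import Mathlib

section
/- Let d ≥ 3. For every a ∈ (0, 1) and every c > 0 there exists a constant K > 0 such that for all x ∈ ℝ^d with |x| ≥ 1, μ( 𝓛({0}) ∩ 𝓛(x + B_{c·|x|^a}) ) ≤ K·|x|^{(a−1)(d−1)}, where x + B_s denotes the closed Euclidean ball of radius s centred at x. -/
open MeasureTheory Set
open scoped RealInnerProductSpace ENNReal NNReal

noncomputable section

/-- Euclidean space `ℝ^d`. -/
abbrev Euc (d : ℕ) := EuclideanSpace ℝ (Fin d)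

/-- The parameter space of lines: pairs `(v, y)` with `‖v‖ = 1` and `⟨v, y⟩ = 0`;
the pair corresponds to the line `{y + t • v : t ∈ ℝ}`. -/
def LineParam (d : ℕ) : Set (Euc d × Euc d) :=
  {p | ‖p.1‖ = 1 ∧ ⟪p.1, p.2⟫ = 0}

/-- The line corresponding to a parameter `(v, y)`: `{y + t • v : t ∈ ℝ}`. -/
def lineOf {d : ℕ} (p : Euc d × Euc d) : Set (Euc d) :=
  {z | ∃ t : ℝ, z = p.2 + t • p.1}

/-- The cylinder of radius 1 around the line with parameter `p`. -/
def cylOf {d : ℕ} (p : Euc d × Euc d) : Set (Euc d) :=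
  {z | ∃ w ∈ lineOf p, dist z w ≤ 1}

/-- `𝓛(A)`: parameters of lines whose cylinder meets `A`. -/
def linesMeeting {d : ℕ} (A : Set (Euc d)) : Set (Euc d × Euc d) :=
  {p ∈ LineParam d | (cylOf p ∩ A).Nonempty}

/-- The Haar measure `μ` on the space of lines:
`μ(A) = ∫_{S^{d-1}} H^{d-1} {y ∈ v^⊥ : (v, y) ∈ A} dσ(v)`, where both the surface
measure `σ` on the unit sphere and `H^{d-1}` are realized by the `(d-1)`-dimensional
Hausdorff measure. -/
def lineMeasure (d : ℕ) (A : Set (Euc d × Euc d)) : ℝ≥0∞ :=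
  ∫⁻ v in Metric.sphere (0 : Euc d) 1,
    μH[((d : ℝ) - 1)] {y : Euc d | ⟪v, y⟫ = 0 ∧ (v, y) ∈ A} ∂(μH[((d : ℝ) - 1)])

/-- The union of the cylinders with parameters in `S`. -/
def cylSet {d : ℕ} (S : Set (Euc d × Euc d)) : Set (Euc d) :=
  ⋃ p ∈ S, cylOf p

/-- The internal distance `ρ_C(x, y)`: infimum of total lengths of polygonal paths
from `x` to `y` all of whose segments lie in `C` (`∞` if there is no such path). -/
def internalDist {d : ℕ} (C : Set (Euc d)) (x y : Euc d) : ℝ≥0∞ :=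
  ⨅ (n : ℕ) (z : Fin (n + 2) → Euc d) (_ : z 0 = x) (_ : z (Fin.last (n + 1)) = y)
    (_ : ∀ k : Fin (n + 1), segment ℝ (z k.castSucc) (z k.succ) ⊆ C),
    ∑ k : Fin (n + 1), ENNReal.ofReal (dist (z k.castSucc) (z k.succ))

/-- `S : Ω → Set (lines)` is the support of a Poisson line process of intensity `u`:
for each Borel `A` of finite `μ`-measure the number of points of `S` in `A` is Poisson
with mean `u·μ(A)`, and the counts of pairwise disjoint Borel sets are independent. -/
structure IsPoissonLineProcess (d : ℕ) (u : ℝ) {Ω : Type*} [MeasurableSpace Ω]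
    (ℙ : Measure Ω) (S : Ω → Set (Euc d × Euc d)) : Prop where
  mem_param : ∀ ω, S ω ⊆ LineParam d
  countable : ∀ ω, (S ω).Countable
  poisson : ∀ A : Set (Euc d × Euc d), MeasurableSet A → lineMeasure d A < ⊤ →
    ∀ k : ℕ, ℙ {ω | (S ω ∩ A).encard = (k : ℕ∞)} =
      ENNReal.ofReal (Real.exp (-(u * (lineMeasure d A).toReal)) *
        (u * (lineMeasure d A).toReal) ^ k / (Nat.factorial k))
  indep : ∀ (n : ℕ) (A : Fin n → Set (Euc d × Euc d)),
    (∀ i, MeasurableSet (A i)) → (Pairwise fun i j => Disjoint (A i) (A j)) →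
    ProbabilityTheory.iIndepFun
      (fun i ω => (S ω ∩ A i).encard) ℙ

section Aux
open Module

/-- the reference constant: Hausdorff measure of the unit ball in dimension d-1 -/
def D0 (d : ℕ) : ℝ≥0∞ := μH[((d : ℝ) - 1)] (Metric.closedBall (0 : Euc (d-1)) 1)

lemma sd_nonneg {d : ℕ} (hd : 3 ≤ d) : (0:ℝ) ≤ (d:ℝ) - 1 := by
  have : (3:ℝ) ≤ d := by exact_mod_cast hd
  linarith

lemma sd_cast {d : ℕ} (hd : 3 ≤ d) : (((d - 1 : ℕ)) : ℝ) = (d:ℝ) - 1 := by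
  have h1 : (1:ℕ) ≤ d := by omega
  push_cast [h1]
  ring

lemma D0_lt_top {d : ℕ} (hd : 3 ≤ d) : D0 d < ⊤ := by
  have h : ((d:ℝ) - 1) = ((finrank ℝ (Euc (d-1)) : ℕ) : ℝ) := by
    rw [finrank_euclideanSpace_fin, sd_cast hd]
  rw [D0, h]
  exact isCompact_closedBall _ _ |>.measure_lt_top

lemma D0_pos : True := trivial

lemma disk_bound {d : ℕ} (hd : 3 ≤ d) (u : Euc d) (hu : u ≠ 0) {β : ℝ} (hβ : 0 < β) :
    μH[((d:ℝ)-1)] {y : Euc d | ⟪u, y⟫ = 0 ∧ ‖y‖ ≤ β}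
      ≤ ENNReal.ofReal β ^ ((d:ℝ)-1) * D0 d := by
  haveI : Fact (finrank ℝ (Euc d) = (d-1) + 1) :=
    ⟨by rw [finrank_euclideanSpace_fin]; omega⟩
  set e := (OrthonormalBasis.fromOrthogonalSpanSingleton (𝕜 := ℝ) (d-1) hu).repr with he
  set f : Euc (d-1) → Euc d := fun w => β • ((e.symm w : (ℝ ∙ u)ᗮ) : Euc d) with hf
  have hlip : LipschitzWith β.toNNReal f := by
    apply LipschitzWith.of_dist_le_mul
    intro w w'
    have : f w - f w' = β • ((e.symm (w - w') : (ℝ ∙ u)ᗮ) : Euc d) := by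
      simp [hf, map_sub, smul_sub]
    rw [dist_eq_norm, this, norm_smul]
    have : ‖((e.symm (w - w') : (ℝ ∙ u)ᗮ) : Euc d)‖ = ‖w - w'‖ := by
      rw [Submodule.norm_coe, e.symm.norm_map]
    rw [this, Real.norm_eq_abs, abs_of_pos hβ, dist_eq_norm,
      Real.coe_toNNReal _ hβ.le]
  have hcov : {y : Euc d | ⟪u, y⟫ = 0 ∧ ‖y‖ ≤ β} ⊆ f '' (Metric.closedBall 0 1) := by
    rintro y ⟨h1, h2⟩
    have hy : y ∈ (ℝ ∙ u)ᗮ := Submodule.mem_orthogonal_singleton_iff_inner_right.mpr h1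
    refine ⟨β⁻¹ • e ⟨y, hy⟩, ?_, ?_⟩
    · rw [Metric.mem_closedBall, dist_zero_right, norm_smul, Real.norm_eq_abs,
        abs_of_pos (inv_pos.mpr hβ), e.norm_map]
      have hn : ‖(⟨y, hy⟩ : (ℝ ∙ u)ᗮ)‖ = ‖y‖ := rfl
      calc β⁻¹ * ‖(⟨y, hy⟩ : (ℝ ∙ u)ᗮ)‖ = β⁻¹ * ‖y‖ := by rw [hn]
        _ ≤ β⁻¹ * β := mul_le_mul_of_nonneg_left h2 (inv_pos.mpr hβ).le
        _ = 1 := inv_mul_cancel₀ hβ.ne'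
    · show β • ((e.symm (β⁻¹ • e ⟨y, hy⟩) : (ℝ ∙ u)ᗮ) : Euc d) = y
      rw [LinearIsometryEquiv.map_smul, e.symm_apply_apply]
      simp only [SetLike.val_smul, smul_smul]
      rw [mul_inv_cancel₀ hβ.ne', one_smul]
  calc μH[((d:ℝ)-1)] {y : Euc d | ⟪u, y⟫ = 0 ∧ ‖y‖ ≤ β}
      ≤ μH[((d:ℝ)-1)] (f '' Metric.closedBall 0 1) := measure_mono hcov
    _ ≤ (β.toNNReal : ℝ≥0∞) ^ ((d:ℝ)-1) * μH[((d:ℝ)-1)] (Metric.closedBall 0 1) :=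
        hlip.hausdorffMeasure_image_le (sd_nonneg hd) _
    _ = ENNReal.ofReal β ^ ((d:ℝ)-1) * D0 d := rfl

lemma sqrt_lip {α β t t' : ℝ} (hα : 0 < α) (hαβ : α^2 + β^2 = 1)
    (ht : |t| ≤ β) (ht' : |t'| ≤ β) :
    |Real.sqrt (1 - t^2) - Real.sqrt (1 - t'^2)| ≤ α⁻¹ * |t - t'| := by
  have hβ : 0 ≤ β := le_trans (abs_nonneg t) ht
  have hb1 : β ≤ 1 := by nlinarith [sq_nonneg α]
  have ht2 : t^2 ≤ β^2 := by rw [← sq_abs]; exact pow_le_pow_left₀ (abs_nonneg t) ht 2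
  have ht'2 : t'^2 ≤ β^2 := by rw [← sq_abs]; exact pow_le_pow_left₀ (abs_nonneg t') ht' 2
  set A := 1 - t^2 with hA
  set B := 1 - t'^2 with hB
  have hAα : α^2 ≤ A := by simp only [hA]; nlinarith
  have hBα : α^2 ≤ B := by simp only [hB]; nlinarith
  have hA0 : 0 ≤ A := le_trans (sq_nonneg α) hAα
  have hB0 : 0 ≤ B := le_trans (sq_nonneg α) hBα
  have hsA : α ≤ Real.sqrt A := by
    rw [show α = Real.sqrt (α^2) from (Real.sqrt_sq hα.le).symm]
    exact Real.sqrt_le_sqrt hAα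
  have hsB : α ≤ Real.sqrt B := by
    rw [show α = Real.sqrt (α^2) from (Real.sqrt_sq hα.le).symm]
    exact Real.sqrt_le_sqrt hBα
  have hpos : 0 < Real.sqrt A + Real.sqrt B := by linarith
  have key : (Real.sqrt A - Real.sqrt B) * (Real.sqrt A + Real.sqrt B) = A - B := by
    have h1 : (Real.sqrt A - Real.sqrt B) * (Real.sqrt A + Real.sqrt B)
        = Real.sqrt A ^ 2 - Real.sqrt B ^ 2 := by ring
    rw [h1, Real.sq_sqrt hA0, Real.sq_sqrt hB0]
  have habs : |Real.sqrt A - Real.sqrt B| = |A - B| / (Real.sqrt A + Real.sqrt B) := by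
    rw [eq_div_iff hpos.ne', ← abs_of_pos hpos, ← abs_mul, key]
  have hnum : |A - B| ≤ 2 * β * |t - t'| := by
    have h1 : A - B = (t' - t) * (t' + t) := by simp only [hA, hB]; ring
    rw [h1, abs_mul, abs_sub_comm t' t]
    have h2 : |t' + t| ≤ 2 * β := by
      calc |t' + t| ≤ |t'| + |t| := abs_add_le _ _
        _ ≤ 2 * β := by linarith
    calc |t - t'| * |t' + t| ≤ |t - t'| * (2 * β) :=
          mul_le_mul_of_nonneg_left h2 (abs_nonneg _)
      _ = 2 * β * |t - t'| := by ring
  calc |Real.sqrt A - Real.sqrt B| = |A - B| / (Real.sqrt A + Real.sqrt B) := habs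
    _ ≤ (2 * β * |t - t'|) / (2 * α) := by
        apply div_le_div₀ (by positivity) hnum (by positivity) (by linarith)
    _ ≤ α⁻¹ * |t - t'| := by
        rw [div_le_iff₀ (by positivity : (0:ℝ) < 2 * α)]
        have h3 : α⁻¹ * |t - t'| * (2 * α) = 2 * |t - t'| := by
          field_simp
        rw [h3]
        nlinarith [abs_nonneg (t - t')]

lemma ball_scale {n : ℕ} {β : ℝ} (hβ : 0 < β) {s : ℝ} (hs : 0 ≤ s) :
    μH[s] (Metric.closedBall (0 : EuclideanSpace ℝ (Fin n)) β)
      ≤ ENNReal.ofReal β ^ s * μH[s] (Metric.closedBall (0 : EuclideanSpace ℝ (Fin n)) 1) := by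
  have hcov : Metric.closedBall (0 : EuclideanSpace ℝ (Fin n)) β
      ⊆ (β • · : EuclideanSpace ℝ (Fin n) → _) '' Metric.closedBall 0 1 := by
    intro y hy
    refine ⟨β⁻¹ • y, ?_, ?_⟩
    · rw [Metric.mem_closedBall, dist_zero_right, norm_smul, Real.norm_eq_abs,
        abs_of_pos (inv_pos.mpr hβ)]
      rw [Metric.mem_closedBall, dist_zero_right] at hy
      calc β⁻¹ * ‖y‖ ≤ β⁻¹ * β := mul_le_mul_of_nonneg_left hy (inv_pos.mpr hβ).le
        _ = 1 := inv_mul_cancel₀ hβ.ne'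
    · show β • β⁻¹ • y = y
      rw [smul_smul, mul_inv_cancel₀ hβ.ne', one_smul]
  calc μH[s] (Metric.closedBall (0 : EuclideanSpace ℝ (Fin n)) β)
      ≤ μH[s] ((β • · : EuclideanSpace ℝ (Fin n) → _) '' Metric.closedBall 0 1) :=
        measure_mono hcov
    _ ≤ (‖β‖₊ : ℝ≥0∞) ^ s * μH[s] (Metric.closedBall (0 : EuclideanSpace ℝ (Fin n)) 1) :=
        (lipschitzWith_smul β).hausdorffMeasure_image_le hs _
    _ = ENNReal.ofReal β ^ s * μH[s] (Metric.closedBall (0 : EuclideanSpace ℝ (Fin n)) 1) := by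
        rw [← Real.enorm_eq_ofReal hβ.le]; rfl

lemma cap_bound {d : ℕ} (hd : 3 ≤ d) (u : Euc d) (hu : ‖u‖ = 1) {α β : ℝ}
    (hα : 0 < α) (hβ : 0 < β) (hαβ : α^2 + β^2 = 1) :
    μH[((d:ℝ)-1)] {v : Euc d | ‖v‖ = 1 ∧ α ≤ ⟪u, v⟫}
      ≤ ENNReal.ofReal ((1 + α⁻¹) * β) ^ ((d:ℝ)-1) * D0 d := by
  have hu0 : u ≠ 0 := by intro h; rw [h, norm_zero] at hu; norm_num at hu
  haveI : Fact (finrank ℝ (Euc d) = (d-1) + 1) :=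
    ⟨by rw [finrank_euclideanSpace_fin]; omega⟩
  set e := (OrthonormalBasis.fromOrthogonalSpanSingleton (𝕜 := ℝ) (d-1) hu0).repr with he
  set g : Euc (d-1) → Euc d :=
    fun w => ((e.symm w : (ℝ ∙ u)ᗮ) : Euc d) + Real.sqrt (1 - ‖w‖^2) • u with hg
  have hlip : LipschitzOnWith (1 + α⁻¹).toNNReal g (Metric.closedBall 0 β) := by
    apply LipschitzOnWith.of_dist_le_mul
    intro w hw w' hw'
    rw [Metric.mem_closedBall, dist_zero_right] at hw hw'
    have hsub : g w - g w' = ((e.symm (w - w') : (ℝ ∙ u)ᗮ) : Euc d)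
        + (Real.sqrt (1 - ‖w‖^2) - Real.sqrt (1 - ‖w'‖^2)) • u := by
      simp [hg, map_sub, sub_smul]; abel
    rw [dist_eq_norm, hsub]
    have h1 : ‖((e.symm (w - w') : (ℝ ∙ u)ᗮ) : Euc d)‖ = ‖w - w'‖ := by
      rw [Submodule.norm_coe, e.symm.norm_map]
    have h2 : |Real.sqrt (1 - ‖w‖^2) - Real.sqrt (1 - ‖w'‖^2)| ≤ α⁻¹ * ‖w - w'‖ := by
      have := sqrt_lip hα hαβ (t := ‖w‖) (t' := ‖w'‖)
        (by rwa [abs_of_nonneg (norm_nonneg _)]) (by rwa [abs_of_nonneg (norm_nonneg _)])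
      refine le_trans this ?_
      exact mul_le_mul_of_nonneg_left (abs_norm_sub_norm_le w w') (inv_pos.mpr hα).le
    calc ‖((e.symm (w - w') : (ℝ ∙ u)ᗮ) : Euc d)
          + (Real.sqrt (1 - ‖w‖^2) - Real.sqrt (1 - ‖w'‖^2)) • u‖
        ≤ ‖((e.symm (w - w') : (ℝ ∙ u)ᗮ) : Euc d)‖
          + ‖(Real.sqrt (1 - ‖w‖^2) - Real.sqrt (1 - ‖w'‖^2)) • u‖ := norm_add_le _ _
      _ = ‖w - w'‖ + |Real.sqrt (1 - ‖w‖^2) - Real.sqrt (1 - ‖w'‖^2)| := by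
          rw [h1, norm_smul, hu, mul_one, Real.norm_eq_abs]
      _ ≤ ‖w - w'‖ + α⁻¹ * ‖w - w'‖ := by linarith
      _ = (1 + α⁻¹).toNNReal * dist w w' := by
          rw [dist_eq_norm, Real.coe_toNNReal _ (by positivity)]; ring
  have hcov : {v : Euc d | ‖v‖ = 1 ∧ α ≤ ⟪u, v⟫} ⊆ g '' (Metric.closedBall 0 β) := by
    rintro v ⟨hv1, hv2⟩
    set c₀ := ⟪u, v⟫ with hc₀
    have hc₀pos : 0 < c₀ := lt_of_lt_of_le hα hv2
    have hc₀le : c₀ ≤ 1 := by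
      calc c₀ ≤ ‖u‖ * ‖v‖ := real_inner_le_norm u v
        _ = 1 := by rw [hu, hv1, mul_one]
    set w₀ := v - c₀ • u with hw₀
    have hperp : ⟪u, w₀⟫ = 0 := by
      rw [hw₀, inner_sub_right, real_inner_smul_right, real_inner_self_eq_norm_sq, hu]
      ring
    have hw₀mem : w₀ ∈ (ℝ ∙ u)ᗮ := Submodule.mem_orthogonal_singleton_iff_inner_right.mpr hperp
    have hvu : ⟪v, u⟫ = c₀ := by rw [real_inner_comm]
    have hnorm : ‖w₀‖^2 = 1 - c₀^2 := by
      rw [hw₀, norm_sub_sq_real, real_inner_smul_right, norm_smul, hv1, hu,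
        Real.norm_eq_abs, mul_one, hvu, sq_abs]
      ring
    have hw₀le : ‖w₀‖ ≤ β := by
      have h1 : ‖w₀‖^2 ≤ β^2 := by rw [hnorm]; nlinarith
      exact le_of_pow_le_pow_left₀ two_ne_zero hβ.le h1
    refine ⟨e ⟨w₀, hw₀mem⟩, ?_, ?_⟩
    · rw [Metric.mem_closedBall, dist_zero_right, e.norm_map]
      exact hw₀le
    · have hn : ‖e ⟨w₀, hw₀mem⟩‖ = ‖w₀‖ := e.norm_map _
      show ((e.symm (e ⟨w₀, hw₀mem⟩) : (ℝ ∙ u)ᗮ) : Euc d)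
          + Real.sqrt (1 - ‖e ⟨w₀, hw₀mem⟩‖^2) • u = v
      rw [e.symm_apply_apply, hn, hnorm]
      have : (1 - (1 - c₀^2)) = c₀^2 := by ring
      rw [this, Real.sqrt_sq hc₀pos.le]
      show w₀ + c₀ • u = v
      rw [hw₀]; abel
  calc μH[((d:ℝ)-1)] {v : Euc d | ‖v‖ = 1 ∧ α ≤ ⟪u, v⟫}
      ≤ μH[((d:ℝ)-1)] (g '' Metric.closedBall 0 β) := measure_mono hcov
    _ ≤ ((1 + α⁻¹).toNNReal : ℝ≥0∞) ^ ((d:ℝ)-1) * μH[((d:ℝ)-1)] (Metric.closedBall 0 β) :=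
        hlip.hausdorffMeasure_image_le (sd_nonneg hd)
    _ ≤ ((1 + α⁻¹).toNNReal : ℝ≥0∞) ^ ((d:ℝ)-1)
        * (ENNReal.ofReal β ^ ((d:ℝ)-1) * D0 d) := by
        exact mul_le_mul_right (ball_scale hβ (sd_nonneg hd)) _
    _ = ENNReal.ofReal ((1 + α⁻¹) * β) ^ ((d:ℝ)-1) * D0 d := by
        rw [← mul_assoc, ← ENNReal.mul_rpow_of_nonneg _ _ (sd_nonneg hd)]
        congr 2
        rw [show ((1 + α⁻¹).toNNReal : ℝ≥0∞) = ENNReal.ofReal (1 + α⁻¹) from rfl,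
          ← ENNReal.ofReal_mul (by positivity)]

lemma sphere_lt_top {d : ℕ} (hd : 3 ≤ d) :
    μH[((d:ℝ)-1)] (Metric.sphere (0 : Euc d) 1) < ⊤ := by
  have hdpos : (0:ℝ) < d := by
    have : (3:ℝ) ≤ d := by exact_mod_cast hd
    linarith
  have h1d : (1:ℝ)/d < 1 := by
    rw [div_lt_one hdpos]
    have : (3:ℝ) ≤ d := by exact_mod_cast hd
    linarith
  set α := Real.sqrt (1/d) with hαdef
  set β := Real.sqrt (1 - 1/d) with hβdef
  have hα : 0 < α := Real.sqrt_pos.mpr (by positivity)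
  have hβ : 0 < β := Real.sqrt_pos.mpr (by linarith)
  have hαβ : α^2 + β^2 = 1 := by
    rw [hαdef, hβdef, Real.sq_sqrt (by positivity), Real.sq_sqrt (by linarith)]
    ring
  set capOf : Fin d × Bool → Set (Euc d) := fun p =>
    {v : Euc d | ‖v‖ = 1 ∧ α ≤ ⟪(if p.2 then EuclideanSpace.single p.1 (1:ℝ)
      else -EuclideanSpace.single p.1 (1:ℝ)), v⟫} with hcap
  have hcov : Metric.sphere (0 : Euc d) 1 ⊆ ⋃ p, capOf p := by
    intro v hv
    have hv1 : ‖v‖ = 1 := by rwa [mem_sphere_zero_iff_norm] at hv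
    have hsum : ∑ i, (v i)^2 = 1 := by
      have h := EuclideanSpace.norm_eq v
      rw [hv1] at h
      have h2 : Real.sqrt (∑ i, ‖v i‖^2) ^ 2 = 1 := by rw [← h]; norm_num
      rw [Real.sq_sqrt (by positivity)] at h2
      simpa [Real.norm_eq_abs, sq_abs] using h2
    have hex : ∃ i, 1/(d:ℝ) ≤ (v i)^2 := by
      by_contra h
      push_neg at h
      have hne : (Finset.univ : Finset (Fin d)).Nonempty := by
        refine Finset.univ_nonempty_iff.mpr ?_
        exact ⟨⟨0, by omega⟩⟩
      have hlt : ∑ i, (v i)^2 < ∑ _i : Fin d, 1/(d:ℝ) :=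
        Finset.sum_lt_sum_of_nonempty hne (fun i _ => h i)
      rw [Finset.sum_const, Finset.card_univ, Fintype.card_fin, nsmul_eq_mul,
        mul_one_div, div_self hdpos.ne'] at hlt
      linarith
    obtain ⟨i, hi⟩ := hex
    have habs : α ≤ |v i| := by
      calc α = Real.sqrt (1/d) := rfl
        _ ≤ Real.sqrt ((v i)^2) := Real.sqrt_le_sqrt hi
        _ = |v i| := Real.sqrt_sq_eq_abs _
    rcases le_or_gt 0 (v i) with h|h
    · refine mem_iUnion.mpr ⟨(i, true), hv1, ?_⟩
      simp only [if_true]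
      rw [EuclideanSpace.inner_single_left]
      simpa [abs_of_nonneg h] using habs
    · refine mem_iUnion.mpr ⟨(i, false), hv1, ?_⟩
      simp only [Bool.false_eq_true, if_false, inner_neg_left,
        EuclideanSpace.inner_single_left]
      simp only [starRingEnd_apply, star_one, one_mul]
      rw [abs_of_neg h] at habs
      simpa using habs
  have hbound : ∀ p : Fin d × Bool,
      μH[((d:ℝ)-1)] (capOf p) ≤ ENNReal.ofReal ((1 + α⁻¹) * β) ^ ((d:ℝ)-1) * D0 d := by
    intro p
    apply cap_bound hd _ _ hα hβ hαβ
    rcases p.2 with _|_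
    · simp [EuclideanSpace.norm_single]
    · simp [EuclideanSpace.norm_single]
  calc μH[((d:ℝ)-1)] (Metric.sphere (0 : Euc d) 1)
      ≤ μH[((d:ℝ)-1)] (⋃ p, capOf p) := measure_mono hcov
    _ ≤ ∑' p, μH[((d:ℝ)-1)] (capOf p) := measure_iUnion_le _
    _ ≤ ∑' _p : Fin d × Bool, ENNReal.ofReal ((1 + α⁻¹) * β) ^ ((d:ℝ)-1) * D0 d :=
        ENNReal.tsum_le_tsum hbound
    _ < ⊤ := by
        rw [tsum_fintype]
        refine ENNReal.sum_lt_top.mpr (fun p _ => ?_)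
        exact ENNReal.mul_lt_top
          (ENNReal.rpow_lt_top_of_nonneg (sd_nonneg hd) ENNReal.ofReal_ne_top)
          (D0_lt_top hd)

lemma norm_y_le {d : ℕ} {v y : Euc d}
    (h : (v, y) ∈ linesMeeting ({0} : Set (Euc d))) : ‖y‖ ≤ 1 := by
  obtain ⟨⟨hv, hvy⟩, z, ⟨w, ⟨t, hw⟩, hzw⟩, hz0⟩ := h
  have hz : z = 0 := hz0
  have hyv : ⟪y, (v : Euc d)⟫ = 0 := by rw [real_inner_comm]; exact hvy
  have h1 : ‖y + t • v‖^2 = ‖y‖^2 + t^2 := by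
    rw [norm_add_sq_real, real_inner_smul_right, hyv, norm_smul, hv,
      Real.norm_eq_abs, mul_one, sq_abs]
    ring
  have h2 : ‖y + t • v‖ ≤ 1 := by
    rw [← hw]
    have : dist z w = ‖w‖ := by rw [hz, dist_zero_left]
    rw [← this]; exact hzw
  have h3 : ‖y‖^2 ≤ 1 := by
    have := pow_le_pow_left₀ (norm_nonneg _) h2 2
    rw [h1] at this
    nlinarith [sq_nonneg t]
  nlinarith [norm_nonneg y]

lemma perp_dist_le {d : ℕ} {v y x : Euc d} {r : ℝ}
    (h : (v, y) ∈ linesMeeting (Metric.closedBall x r)) :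
    ‖x - ⟪x, v⟫ • v - y‖ ≤ 1 + r := by
  obtain ⟨⟨hv, hvy⟩, z, ⟨w, ⟨t, hw⟩, hzw⟩, hzx⟩ := h
  have hzx' : dist z x ≤ r := hzx
  have hxw : dist x w ≤ 1 + r := by
    calc dist x w ≤ dist x z + dist z w := dist_triangle _ _ _
      _ ≤ r + 1 := add_le_add (by rwa [dist_comm]) hzw
      _ = 1 + r := by ring
  set q := x - ⟪x, v⟫ • v - y with hq
  have hqv : ⟪q, (v : Euc d)⟫ = 0 := by
    rw [hq, inner_sub_left, inner_sub_left, real_inner_smul_left,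
      real_inner_self_eq_norm_sq, hv]
    have : ⟪y, (v : Euc d)⟫ = 0 := by rw [real_inner_comm]; exact hvy
    rw [this]
    ring
  have hdecomp : x - w = q + (⟪x, v⟫ - t) • v := by
    rw [hw, hq]
    simp only [sub_smul]
    abel
  have h1 : ‖x - w‖^2 = ‖q‖^2 + (⟪x, v⟫ - t)^2 := by
    rw [hdecomp, norm_add_sq_real, real_inner_smul_right, hqv, norm_smul, hv,
      Real.norm_eq_abs, mul_one, sq_abs]
    ring
  have h2 : ‖q‖^2 ≤ ‖x - w‖^2 := by rw [h1]; nlinarith [sq_nonneg (⟪x, v⟫ - t)]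
  have h3 : ‖x - w‖ ≤ 1 + r := by rw [← dist_eq_norm]; exact hxw
  nlinarith [norm_nonneg q, norm_nonneg (x - w)]

lemma lineMeasure_le {d : ℕ} (hd : 3 ≤ d) (x : Euc d) (r : ℝ) :
    lineMeasure d (linesMeeting ({0} : Set (Euc d)) ∩ linesMeeting (Metric.closedBall x r))
      ≤ D0 d * μH[((d:ℝ)-1)]
          ({v : Euc d | ‖x - ⟪x, v⟫ • v‖ ≤ 2 + r} ∩ Metric.sphere (0 : Euc d) 1) := by
  set A := linesMeeting ({0} : Set (Euc d)) ∩ linesMeeting (Metric.closedBall x r) with hA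
  set Cap := {v : Euc d | ‖x - ⟪x, v⟫ • v‖ ≤ 2 + r} with hCap
  have hCapMeas : MeasurableSet Cap := by
    have hcont : Continuous fun v : Euc d => ‖x - ⟪x, v⟫ • v‖ :=
      by fun_prop
    exact (isClosed_le hcont continuous_const).measurableSet
  have hpt : ∀ v : Euc d,
      μH[((d:ℝ)-1)] {y : Euc d | ⟪v, y⟫ = 0 ∧ (v, y) ∈ A}
        ≤ Cap.indicator (fun _ => D0 d) v := by
    intro v
    by_cases hvc : v ∈ Cap
    · rw [indicator_of_mem hvc]
      rcases eq_empty_or_nonempty {y : Euc d | ⟪v, y⟫ = 0 ∧ (v, y) ∈ A} with he | ⟨y₀, hy₀⟩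
      · rw [he, measure_empty]; exact zero_le
      · have hv1 : ‖v‖ = 1 := hy₀.2.1.1.1
        have hv0 : v ≠ 0 := by intro h0; rw [h0, norm_zero] at hv1; norm_num at hv1
        have hsub : {y : Euc d | ⟪v, y⟫ = 0 ∧ (v, y) ∈ A}
            ⊆ {y : Euc d | ⟪v, y⟫ = 0 ∧ ‖y‖ ≤ 1} :=
          fun y hy => ⟨hy.1, norm_y_le hy.2.1⟩
        calc μH[((d:ℝ)-1)] {y : Euc d | ⟪v, y⟫ = 0 ∧ (v, y) ∈ A}
            ≤ μH[((d:ℝ)-1)] {y : Euc d | ⟪v, y⟫ = 0 ∧ ‖y‖ ≤ 1} := measure_mono hsub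
          _ ≤ ENNReal.ofReal 1 ^ ((d:ℝ)-1) * D0 d := disk_bound hd v hv0 one_pos
          _ = D0 d := by rw [ENNReal.ofReal_one, ENNReal.one_rpow, one_mul]
    · have hemp : {y : Euc d | ⟪v, y⟫ = 0 ∧ (v, y) ∈ A} = ∅ := by
        ext y
        simp only [mem_setOf_eq, mem_empty_iff_false, iff_false, not_and]
        intro _ hmem
        exfalso
        apply hvc
        have hy1 := norm_y_le hmem.1
        have hq := perp_dist_le hmem.2
        show ‖x - ⟪x, v⟫ • v‖ ≤ 2 + r
        calc ‖x - ⟪x, v⟫ • v‖ = ‖(x - ⟪x, v⟫ • v - y) + y‖ := by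
              congr 1; abel
          _ ≤ ‖x - ⟪x, v⟫ • v - y‖ + ‖y‖ := norm_add_le _ _
          _ ≤ (1 + r) + 1 := add_le_add hq hy1
          _ = 2 + r := by ring
      rw [hemp, measure_empty, indicator_of_notMem hvc]
  calc lineMeasure d A
      = ∫⁻ v in Metric.sphere (0 : Euc d) 1,
          μH[((d:ℝ)-1)] {y : Euc d | ⟪v, y⟫ = 0 ∧ (v, y) ∈ A} ∂(μH[((d:ℝ)-1)]) := rfl
    _ ≤ ∫⁻ v in Metric.sphere (0 : Euc d) 1,
          Cap.indicator (fun _ => D0 d) v ∂(μH[((d:ℝ)-1)]) := lintegral_mono hpt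
    _ = D0 d * (μH[((d:ℝ)-1)]).restrict (Metric.sphere (0 : Euc d) 1) Cap := by
        rw [lintegral_indicator hCapMeas, setLIntegral_const]
    _ = D0 d * μH[((d:ℝ)-1)] (Cap ∩ Metric.sphere (0 : Euc d) 1) := by
        rw [Measure.restrict_apply hCapMeas]

end Aux

set_option maxHeartbeats 1000000 in
/-- **Corollary (visibility of a ball from a point).** Let `d ≥ 3`. For every `a ∈ (0, 1)`
and `c > 0` there is `K > 0` such that for all `x` with `|x| ≥ 1`,
`μ(𝓛({0}) ∩ 𝓛(x + B_{c·|x|^a})) ≤ K·|x|^{(a-1)(d-1)}`. -/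
theorem measure_lines_point_to_ball (d : ℕ) (hd : 3 ≤ d)
    (a : ℝ) (ha : a ∈ Set.Ioo (0 : ℝ) 1) (c : ℝ) (hc : 0 < c) :
    ∃ K : ℝ, 0 < K ∧ ∀ x : Euc d, 1 ≤ ‖x‖ →
      lineMeasure d
          (linesMeeting ({0} : Set (Euc d)) ∩ linesMeeting (Metric.closedBall x (c * ‖x‖ ^ a)))
        ≤ ENNReal.ofReal (K * ‖x‖ ^ ((a - 1) * ((d : ℝ) - 1))) := by
  obtain ⟨ha0, ha1⟩ := ha
  have hd1 : (0:ℝ) ≤ (d:ℝ) - 1 := sd_nonneg hd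
  set D0r := (D0 d).toReal with hD0r
  clear_value D0r
  have hD0top : D0 d ≠ ⊤ := (D0_lt_top hd).ne
  have hD0eq : D0 d = ENNReal.ofReal D0r := by rw [hD0r]; exact (ENNReal.ofReal_toReal hD0top).symm
  have hD0rpos : 0 ≤ D0r := by rw [hD0r]; exact ENNReal.toReal_nonneg
  set Sf := μH[((d:ℝ)-1)] (Metric.sphere (0 : Euc d) 1) with hSfdef
  have hSftop : Sf ≠ ⊤ := (sphere_lt_top hd).ne
  set Sfr := Sf.toReal with hSfr
  clear_value Sfr
  have hSfeq : Sf = ENNReal.ofReal Sfr := by rw [hSfr]; exact (ENNReal.ofReal_toReal hSftop).symm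
  have h1a : (0:ℝ) < 1 - a := by linarith
  set M : ℝ := (2*(2+c)) ^ (1/(1-a)) with hM
  clear_value M
  have hbase : (1:ℝ) < 2*(2+c) := by linarith
  have hM1 : 1 < M := by
    rw [hM]
    exact (Real.one_lt_rpow_iff_of_pos (by linarith)).mpr (Or.inl ⟨hbase, by positivity⟩)
  have hMpos : (0:ℝ) < M := lt_trans one_pos hM1
  have hMpow : M ^ (1-a) = 2*(2+c) := by
    rw [hM, ← Real.rpow_mul (by linarith), one_div, inv_mul_cancel₀ h1a.ne', Real.rpow_one]
  set E := (a - 1) * ((d:ℝ) - 1) with hE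
  clear_value E
  have hEneg : E ≤ 0 := by rw [hE]; exact mul_nonpos_of_nonpos_of_nonneg (by linarith) hd1
  set K := 2 * D0r^2 * (3*(2+c)) ^ ((d:ℝ)-1) + (D0r * Sfr * M ^ (-E) + 1) with hK
  clear_value K
  have hSfrpos : 0 ≤ Sfr := by rw [hSfr]; exact ENNReal.toReal_nonneg
  have hKpos : 0 < K := by
    have h1 : (0:ℝ) ≤ 2 * D0r^2 * (3*(2+c)) ^ ((d:ℝ)-1) := by positivity
    have h2 : (0:ℝ) ≤ D0r * Sfr * M ^ (-E) := by positivity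
    linarith
  refine ⟨K, hKpos, ?_⟩
  intro x hx
  have hxpos : 0 < ‖x‖ := lt_of_lt_of_le one_pos hx
  have hxEnn : (0:ℝ) ≤ ‖x‖ ^ E := Real.rpow_nonneg (norm_nonneg x) _
  set r := c * ‖x‖ ^ a with hr
  clear_value r
  have hrpos : 0 < r := by
    rw [hr]
    have : (0:ℝ) < ‖x‖ ^ a := Real.rpow_pos_of_pos hxpos a
    positivity
  rcases le_or_gt M ‖x‖ with hbig | hsmall
  · -- large ‖x‖
    set s := (2 + r)/‖x‖ with hs
    clear_value s
    have hspos : 0 < s := by rw [hs]; positivity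
    have hsle : s ≤ (2+c) * ‖x‖ ^ (a-1) := by
      rw [hs, div_le_iff₀ hxpos]
      have h1 : (2+c) * ‖x‖^(a-1) * ‖x‖ = (2+c) * ‖x‖^a := by
        rw [mul_assoc, ← Real.rpow_add_one hxpos.ne']
        norm_num
      rw [h1]
      have h2 : (1:ℝ) ≤ ‖x‖ ^ a := Real.one_le_rpow hx ha0.le
      rw [hr]; nlinarith
    have hshalf : s ≤ 1/2 := by
      have hm1 : ‖x‖ ^ (a-1) ≤ M ^ (a-1) :=
        Real.rpow_le_rpow_of_nonpos hMpos hbig (by linarith)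
      have hM2 : M ^ (a-1) = (2*(2+c))⁻¹ := by
        rw [show a - 1 = -(1-a) by ring, Real.rpow_neg hMpos.le, hMpow]
      calc s ≤ (2+c) * ‖x‖^(a-1) := hsle
        _ ≤ (2+c) * M^(a-1) := mul_le_mul_of_nonneg_left hm1 (by linarith)
        _ = (2+c) * (2*(2+c))⁻¹ := by rw [hM2]
        _ = 1/2 := by field_simp
    set u := ‖x‖⁻¹ • x with hu
    clear_value u
    have huu : ‖u‖ = 1 := by
      rw [hu, norm_smul, Real.norm_eq_abs, abs_of_pos (inv_pos.mpr hxpos),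
        inv_mul_cancel₀ hxpos.ne']
    set α := Real.sqrt (1 - s^2) with hαdef
    clear_value α
    have hs2 : s^2 ≤ 1/4 := by nlinarith
    have hαpos : 0 < α := by rw [hαdef]; exact Real.sqrt_pos.mpr (by linarith)
    have hαβ : α^2 + s^2 = 1 := by
      rw [hαdef, Real.sq_sqrt (by linarith)]; ring
    have hα23 : (2/3:ℝ) ≤ α := by
      nlinarith [hαβ, hαpos, hs2, sq_nonneg α]
    have hsub : {v : Euc d | ‖x - ⟪x, v⟫ • v‖ ≤ 2 + r} ∩ Metric.sphere (0 : Euc d) 1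
        ⊆ {v : Euc d | ‖v‖ = 1 ∧ α ≤ ⟪u, v⟫} ∪ {v : Euc d | ‖v‖ = 1 ∧ α ≤ ⟪-u, v⟫} := by
      rintro v ⟨hvc, hvs⟩
      have hv1 : ‖v‖ = 1 := by rwa [mem_sphere_zero_iff_norm] at hvs
      set c₀ := ⟪u, v⟫ with hc₀
      clear_value c₀
      have hxu : x = ‖x‖ • u := by rw [hu, smul_smul, mul_inv_cancel₀ hxpos.ne', one_smul]
      have hx0 : ⟪x, v⟫ = ‖x‖ * c₀ := by
        rw [hc₀]
        nth_rewrite 1 [hxu]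
        exact real_inner_smul_left _ _ _
      have hkey : ‖u - c₀ • v‖ ≤ s := by
        have h1 : x - ⟪x, v⟫ • v = ‖x‖ • (u - c₀ • v) := by
          rw [hx0, smul_sub, smul_smul]
          nth_rewrite 1 [hxu]
          rfl
        have h2 : ‖x - ⟪x, v⟫ • v‖ = ‖x‖ * ‖u - c₀ • v‖ := by
          rw [h1, norm_smul, Real.norm_eq_abs, abs_of_pos hxpos]
        rw [hs, le_div_iff₀ hxpos]
        have := hvc
        rw [mem_setOf_eq, h2] at this
        linarith [this]
      have hnormsq : ‖u - c₀ • v‖^2 = 1 - c₀^2 := by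
        rw [norm_sub_sq_real, real_inner_smul_right, norm_smul, huu, hv1,
          Real.norm_eq_abs, mul_one, ← hc₀, sq_abs]
        ring
      have hc₀sq : α^2 ≤ c₀^2 := by
        have h3 : ‖u - c₀ • v‖^2 ≤ s^2 := pow_le_pow_left₀ (norm_nonneg _) hkey 2
        nlinarith
      have habs : α ≤ |c₀| := by
        calc α = Real.sqrt (α^2) := (Real.sqrt_sq hαpos.le).symm
          _ ≤ Real.sqrt (c₀^2) := Real.sqrt_le_sqrt hc₀sq
          _ = |c₀| := Real.sqrt_sq_eq_abs _
      rcases le_or_gt 0 c₀ with h|h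
      · left
        refine ⟨hv1, ?_⟩
        rw [← hc₀]
        rwa [abs_of_nonneg h] at habs
      · right
        refine ⟨hv1, ?_⟩
        rw [inner_neg_left, ← hc₀]
        rwa [abs_of_neg h] at habs
    have hαβ' : α^2 + s^2 = 1 := hαβ
    have hcapm : μH[((d:ℝ)-1)]
          ({v : Euc d | ‖x - ⟪x, v⟫ • v‖ ≤ 2 + r} ∩ Metric.sphere (0 : Euc d) 1)
        ≤ 2 * (ENNReal.ofReal ((1+α⁻¹)*s) ^ ((d:ℝ)-1) * D0 d) := by
      refine le_trans (measure_mono hsub) (le_trans (measure_union_le _ _) ?_)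
      have b1 := cap_bound hd u huu hαpos hspos hαβ'
      have b2 := cap_bound hd (-u) (by rwa [norm_neg]) hαpos hspos hαβ'
      rw [two_mul]
      exact add_le_add b1 b2
    have hcoef : (1+α⁻¹)*s ≤ 3*(2+c) * ‖x‖^(a-1) := by
      have hainv : α⁻¹ ≤ 3/2 := by
        rw [inv_le_comm₀ (by linarith) (by norm_num)]
        linarith
      have h1 : (1+α⁻¹) ≤ 3 := by linarith
      calc (1+α⁻¹)*s ≤ 3 * s := mul_le_mul_of_nonneg_right h1 hspos.le
        _ ≤ 3 * ((2+c) * ‖x‖^(a-1)) := mul_le_mul_of_nonneg_left hsle (by norm_num)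
        _ = 3*(2+c) * ‖x‖^(a-1) := by ring
    have hcap := lineMeasure_le hd x r
    calc lineMeasure d (linesMeeting ({0} : Set (Euc d))
            ∩ linesMeeting (Metric.closedBall x r))
        ≤ D0 d * μH[((d:ℝ)-1)]
            ({v : Euc d | ‖x - ⟪x, v⟫ • v‖ ≤ 2 + r} ∩ Metric.sphere (0 : Euc d) 1) := hcap
      _ ≤ D0 d * (2 * (ENNReal.ofReal ((1+α⁻¹)*s) ^ ((d:ℝ)-1) * D0 d)) :=
          mul_le_mul_right hcapm _
      _ ≤ D0 d * (2 * (ENNReal.ofReal (3*(2+c) * ‖x‖^(a-1)) ^ ((d:ℝ)-1) * D0 d)) := by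
          refine mul_le_mul_right (mul_le_mul_right (mul_le_mul_left ?_ _) _) _
          exact ENNReal.rpow_le_rpow (ENNReal.ofReal_le_ofReal hcoef) hd1
      _ = ENNReal.ofReal (2 * D0r^2 * ((3*(2+c)) ^ ((d:ℝ)-1) * ‖x‖^E)) := by
          rw [hD0eq, ENNReal.ofReal_rpow_of_nonneg (by positivity) hd1]
          rw [Real.mul_rpow (by positivity) (Real.rpow_nonneg (norm_nonneg x) _)]
          rw [← Real.rpow_mul (norm_nonneg x), ← hE]
          have hA : (0:ℝ) ≤ (3*(2+c)) ^ ((d:ℝ)-1) := Real.rpow_nonneg (by linarith) _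
          have hring : (2 * D0r^2 * ((3*(2+c)) ^ ((d:ℝ)-1) * ‖x‖^E))
              = D0r * (2 * (((3*(2+c)) ^ ((d:ℝ)-1) * ‖x‖^E) * D0r)) := by ring
          rw [hring, ENNReal.ofReal_mul hD0rpos, ENNReal.ofReal_mul (by norm_num : (0:ℝ) ≤ 2),
            ENNReal.ofReal_mul (mul_nonneg hA hxEnn),
            ENNReal.ofReal_mul hA, ENNReal.ofReal_ofNat]
      _ ≤ ENNReal.ofReal (K * ‖x‖ ^ E) := by
          apply ENNReal.ofReal_le_ofReal
          have hcK : 2 * D0r^2 * (3*(2+c)) ^ ((d:ℝ)-1) ≤ K := by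
            rw [hK]
            have : (0:ℝ) ≤ D0r * Sfr * M ^ (-E) := by positivity
            linarith
          calc 2 * D0r^2 * ((3*(2+c)) ^ ((d:ℝ)-1) * ‖x‖^E)
              = (2 * D0r^2 * (3*(2+c)) ^ ((d:ℝ)-1)) * ‖x‖^E := by ring
            _ ≤ K * ‖x‖^E := mul_le_mul_of_nonneg_right hcK hxEnn
  · -- small ‖x‖
    have hcap := lineMeasure_le hd x r
    have hsphere : μH[((d:ℝ)-1)]
          ({v : Euc d | ‖x - ⟪x, v⟫ • v‖ ≤ 2 + r} ∩ Metric.sphere (0 : Euc d) 1)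
        ≤ Sf := measure_mono inter_subset_right
    calc lineMeasure d (linesMeeting ({0} : Set (Euc d))
            ∩ linesMeeting (Metric.closedBall x r))
        ≤ D0 d * Sf := le_trans hcap (mul_le_mul_right hsphere _)
      _ = ENNReal.ofReal (D0r * Sfr) := by
          rw [hD0eq, hSfeq, ← ENNReal.ofReal_mul hD0rpos]
      _ ≤ ENNReal.ofReal (K * ‖x‖ ^ E) := by
          apply ENNReal.ofReal_le_ofReal
          have h1 : M ^ E ≤ ‖x‖ ^ E :=
            Real.rpow_le_rpow_of_nonpos hxpos hsmall.le hEneg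
          have hME : M ^ (-E) * M ^ E = 1 := by
            rw [← Real.rpow_add hMpos]
            norm_num
          have hMEnn : (0:ℝ) ≤ M ^ E := Real.rpow_nonneg hMpos.le _
          have h2 : D0r * Sfr ≤ (D0r * Sfr * M ^ (-E) + 1) * M ^ E := by
            have h3 : (D0r * Sfr * M ^ (-E) + 1) * M ^ E
                = D0r * Sfr * (M ^ (-E) * M ^ E) + M ^ E := by ring
            rw [h3, hME, mul_one]
            linarith
          have h4 : (D0r * Sfr * M ^ (-E) + 1) * M ^ E
              ≤ (D0r * Sfr * M ^ (-E) + 1) * ‖x‖ ^ E := by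
            apply mul_le_mul_of_nonneg_left h1 (by positivity)
          have h5 : (D0r * Sfr * M ^ (-E) + 1) * ‖x‖ ^ E ≤ K * ‖x‖ ^ E := by
            apply mul_le_mul_of_nonneg_right _ hxEnn
            rw [hK]
            have : (0:ℝ) ≤ 2 * D0r^2 * (3*(2+c)) ^ ((d:ℝ)-1) := by positivity
            linarith
          linarith
end
end

section
/- Let (Ω, 𝓐, ℙ) be a probability space with a filtration (𝓕_n)_{n=0}^N, and let X₁, …, X_N be ℕ-valued random variables such that X_n is 𝓕_n-measurable and, for real constants u > 0 and μ₁, …, μ_N satisfying μ_n ≥ μ₀ > 0 for all n, the conditional law of X_n given 𝓕_{n−1} is Poisson with mean u·μ_n; that is, for every n ∈ {1, …, N} and every k ∈ ℕ, ℙ[X_n = k | 𝓕_{n−1}] = e^{−u·μ_n}·(u·μ_n)^k / k! almost surely. Set I_n = 1{X_n > 0} and p = 1 − e^{−u·μ₀} ∈ (0, 1). Then ℙ( ∑_{n=1}^N I_n ≤ p·N/2 ) ≤ exp( −p²·N/8 ). -/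
open MeasureTheory

/-- Quadratic upper bound on `exp (-t)` for `t ≥ 0`. -/
lemma exp_neg_le_quadratic {t : ℝ} (ht : 0 ≤ t) : Real.exp (-t) ≤ 1 - t + t ^ 2 / 2 := by
  set f : ℝ → ℝ := fun s => 1 - s + s ^ 2 / 2 - Real.exp (-s) with hf
  have hd : ∀ x : ℝ, HasDerivAt f (-1 + x + Real.exp (-x)) x := by
    intro x
    have h1 : HasDerivAt (fun s : ℝ => Real.exp (-s)) (-Real.exp (-x)) x := by
      exact ((Real.hasDerivAt_exp (-x)).comp x ((hasDerivAt_id x).neg)).congr_deriv (by ring)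
    have h2 : HasDerivAt (fun s : ℝ => 1 - s + s ^ 2 / 2) (-1 + x) x := by
      have := ((hasDerivAt_const x (1:ℝ)).sub (hasDerivAt_id x)).add
        ((hasDerivAt_pow 2 x).div_const 2)
      refine this.congr_deriv ?_
      push_cast; ring
    have := h2.sub h1
    refine this.congr_deriv ?_
    ring
  have hmono : MonotoneOn f (Set.Ici 0) := by
    apply monotoneOn_of_deriv_nonneg (convex_Ici 0)
    · exact Continuous.continuousOn (by fun_prop)
    · intro x _; exact (hd x).differentiableAt.differentiableWithinAt
    · intro x hx
      rw [(hd x).deriv]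
      have := Real.add_one_le_exp (-x)
      linarith
  have h0 : f 0 = 0 := by simp [hf]
  have := hmono (Set.self_mem_Ici) (Set.mem_Ici.mpr ht) ht
  rw [h0] at this
  simp only [hf] at this
  linarith

/-- **Lemma 4.1 (Azuma–Hoeffding for conditionally Poisson counts).** If, with respect to
a filtration `𝓕`, each `X_n` is `𝓕 n`-measurable and its conditional law given `𝓕 (n-1)`
is Poisson with mean `u·μ_n`, where `μ_n ≥ μ₀ > 0`, then with `I_n = 1{X_n > 0}` and
`p = 1 - exp(-u·μ₀)` we have `ℙ(∑_{n=1}^N I_n ≤ pN/2) ≤ exp(-p²N/8)`. -/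
theorem azuma_poisson_counts {Ω : Type*} [m0 : MeasurableSpace Ω]
    (ℙ : Measure Ω) [IsProbabilityMeasure ℙ]
    (N : ℕ) (𝓕 : ℕ → MeasurableSpace Ω) (hmono : Monotone 𝓕) (hle : ∀ n, 𝓕 n ≤ m0)
    (X : ℕ → Ω → ℕ) (hX : ∀ n, 1 ≤ n → n ≤ N → Measurable[𝓕 n] (X n))
    (u : ℝ) (hu : 0 < u) (μs : ℕ → ℝ) (μ₀ : ℝ) (hμ₀ : 0 < μ₀)
    (hμs : ∀ n, 1 ≤ n → n ≤ N → μ₀ ≤ μs n)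
    (hPoisson : ∀ n, 1 ≤ n → n ≤ N → ∀ k : ℕ,
      (MeasureTheory.condExp (𝓕 (n - 1)) ℙ (fun ω => if X n ω = k then (1 : ℝ) else 0))
        =ᵐ[ℙ] fun _ => Real.exp (-(u * μs n)) * (u * μs n) ^ k / (Nat.factorial k)) :
    ℙ {ω | ∑ n ∈ Finset.Icc 1 N, (if 0 < X n ω then (1 : ℝ) else 0)
          ≤ (1 - Real.exp (-(u * μ₀))) * N / 2}
      ≤ ENNReal.ofReal (Real.exp (-((1 - Real.exp (-(u * μ₀))) ^ 2 * N / 8))) := by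
  classical
  set q : ℝ := Real.exp (-(u * μ₀)) with hqdef
  set p : ℝ := 1 - q with hpdef
  have hq0 : 0 < q := Real.exp_pos _
  have hq1 : q < 1 := by
    rw [hqdef]
    exact Real.exp_lt_one_iff.mpr (by nlinarith)
  have hp0 : 0 < p := by simp only [hpdef]; linarith
  have hp1 : p < 1 := by simp only [hpdef]; linarith
  set t : ℝ := p / 2 with htdef
  have ht0 : 0 < t := by positivity
  set e : ℝ := Real.exp (-t) with hedef
  have he0 : 0 < e := Real.exp_pos _
  have he1 : e < 1 := Real.exp_lt_one_iff.mpr (by linarith)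
  set c : ℝ := 1 - p * (1 - e) with hcdef
  have hc0 : 0 < c := by nlinarith
  -- the factors of the exponential martingale
  set Y : ℕ → Ω → ℝ := fun n ω => if 0 < X n ω then e else 1 with hYdef
  have hYe : ∀ n ω, e ≤ Y n ω := by
    intro n ω; simp only [hYdef]; split <;> linarith
  have hY1 : ∀ n ω, Y n ω ≤ 1 := by
    intro n ω; simp only [hYdef]; split <;> linarith
  have hYmeas : ∀ n, 1 ≤ n → n ≤ N → Measurable[𝓕 n] (Y n) := by
    intro n h1 h2
    exact Measurable.ite (measurableSet_lt measurable_const (hX n h1 h2))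
      measurable_const measurable_const
  -- partial products
  set S : ℕ → Ω → ℝ := fun m ω => ∏ n ∈ Finset.Icc 1 m, Y n ω with hSdef
  have hS0 : ∀ m ω, 0 ≤ S m ω := by
    intro m ω
    exact Finset.prod_nonneg fun n _ => le_trans he0.le (hYe n ω)
  have hS1 : ∀ m ω, S m ω ≤ 1 := by
    intro m ω
    exact Finset.prod_le_one (fun n _ => le_trans he0.le (hYe n ω)) fun n _ => hY1 n ω
  have hSmeas : ∀ m, m ≤ N → Measurable[𝓕 m] (S m) := by
    intro m hm
    apply Finset.measurable_prod
    intro n hn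
    rw [Finset.mem_Icc] at hn
    exact (hYmeas n hn.1 (hn.2.trans hm)).mono (hmono hn.2) le_rfl
  -- integrability helper
  have hint : ∀ g : Ω → ℝ, Measurable g → (∀ ω, g ω ∈ Set.Icc (0:ℝ) 1) → Integrable g ℙ := by
    intro g hg hb
    refine (integrable_const (1:ℝ)).mono' hg.aestronglyMeasurable (ae_of_all _ fun ω => ?_)
    rw [Real.norm_eq_abs, abs_le]
    constructor
    · linarith [(hb ω).1]
    · exact (hb ω).2
  have hSint : ∀ m, m ≤ N → Integrable (S m) ℙ := by
    intro m hm
    exact hint _ ((hSmeas m hm).mono (hle m) le_rfl) fun ω => ⟨hS0 m ω, hS1 m ω⟩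
  -- conditional expectation of each factor
  have hcond : ∀ n, 1 ≤ n → n ≤ N →
      MeasureTheory.condExp (𝓕 (n - 1)) ℙ (Y n)
        =ᵐ[ℙ] fun _ => e + (1 - e) * Real.exp (-(u * μs n)) := by
    intro n h1 h2
    set Z : Ω → ℝ := fun ω => if X n ω = 0 then 1 else 0 with hZdef
    have hYZ : Y n = (fun _ => e) + (1 - e) • Z := by
      funext ω
      simp only [hYdef, hZdef, Pi.add_apply, Pi.smul_apply, smul_eq_mul]
      by_cases h : X n ω = 0
      · simp [h]
      · have : 0 < X n ω := Nat.pos_of_ne_zero h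
        simp [this, h]
    have hZint : Integrable Z ℙ := by
      refine hint _ ?_ fun ω => ?_
      · exact Measurable.ite (((hX n h1 h2).mono (hle n) le_rfl) (measurableSet_singleton 0))
          measurable_const measurable_const
      · simp only [hZdef]; split <;> simp
    have hZcond := hPoisson n h1 h2 0
    simp only [pow_zero, Nat.factorial_zero, Nat.cast_one, mul_one, div_one] at hZcond
    calc MeasureTheory.condExp (𝓕 (n - 1)) ℙ (Y n)
        = MeasureTheory.condExp (𝓕 (n - 1)) ℙ ((fun _ => e) + (1 - e) • Z) := by rw [hYZ]
      _ =ᵐ[ℙ] MeasureTheory.condExp (𝓕 (n - 1)) ℙ (fun _ => e)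
            + MeasureTheory.condExp (𝓕 (n - 1)) ℙ ((1 - e) • Z) :=
          condExp_add (integrable_const e) (hZint.smul (1 - e)) (𝓕 (n - 1))
      _ =ᵐ[ℙ] (fun _ => e) + (1 - e) • MeasureTheory.condExp (𝓕 (n - 1)) ℙ Z := by
          filter_upwards [condExp_smul (μ := ℙ) (m := 𝓕 (n - 1)) (1 - e) Z] with ω hω
          simp only [Pi.add_apply]
          rw [hω, condExp_const (hle (n - 1))]
      _ =ᵐ[ℙ] fun _ => e + (1 - e) * Real.exp (-(u * μs n)) := by
          filter_upwards [hZcond] with ω hω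
          simp only [Pi.add_apply, Pi.smul_apply, smul_eq_mul, hZdef, hω]
  -- the per-step constant is at most c
  have hdc : ∀ n, 1 ≤ n → n ≤ N → e + (1 - e) * Real.exp (-(u * μs n)) ≤ c := by
    intro n h1 h2
    have hexp : Real.exp (-(u * μs n)) ≤ q := by
      rw [hqdef]
      apply Real.exp_le_exp.mpr
      have := hμs n h1 h2
      nlinarith
    have h1e : (0:ℝ) ≤ 1 - e := by linarith
    calc e + (1 - e) * Real.exp (-(u * μs n)) ≤ e + (1 - e) * q := by nlinarith
      _ = c := by simp only [hcdef, hpdef]; ring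
  -- the key induction
  have key : ∀ m, m ≤ N → ∫ ω, S m ω ∂ℙ ≤ c ^ m := by
    intro m
    induction m with
    | zero =>
      intro _
      simp [hSdef]
    | succ m ih =>
      intro hm
      have hm' : m ≤ N := Nat.le_of_succ_le hm
      have h1 : 1 ≤ m + 1 := Nat.succ_le_succ (Nat.zero_le m)
      have hSsucc : S (m + 1) = S m * Y (m + 1) := by
        funext ω
        exact Finset.prod_Icc_succ_top h1 _
      have hYm : Measurable (Y (m + 1)) := (hYmeas (m + 1) h1 hm).mono (hle (m + 1)) le_rfl
      have hYint : Integrable (Y (m + 1)) ℙ :=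
        hint _ hYm fun ω => ⟨le_trans he0.le (hYe _ ω), hY1 _ ω⟩
      have hmulint : Integrable (S m * Y (m + 1)) ℙ := by
        refine hint _ (((hSmeas m hm').mono (hle m) le_rfl).mul hYm) fun ω => ?_
        constructor
        · exact mul_nonneg (hS0 m ω) (le_trans he0.le (hYe _ ω))
        · calc S m ω * Y (m + 1) ω ≤ 1 * 1 :=
              mul_le_mul (hS1 m ω) (hY1 _ ω) (le_trans he0.le (hYe _ ω)) zero_le_one
            _ = 1 := mul_one 1
      have hpull := condExp_mul_of_stronglyMeasurable_left (μ := ℙ) (m := 𝓕 m)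
        ((hSmeas m hm').stronglyMeasurable) hmulint hYint
      have hcondm := hcond (m + 1) h1 hm
      simp only [Nat.add_sub_cancel] at hcondm
      calc ∫ ω, S (m + 1) ω ∂ℙ = ∫ ω, (S m * Y (m + 1)) ω ∂ℙ := by rw [hSsucc]
        _ = ∫ ω, (MeasureTheory.condExp (𝓕 m) ℙ (S m * Y (m + 1))) ω ∂ℙ :=
            (integral_condExp (hle m)).symm
        _ = ∫ ω, S m ω * (MeasureTheory.condExp (𝓕 m) ℙ (Y (m + 1))) ω ∂ℙ :=
            integral_congr_ae hpull
        _ = ∫ ω, S m ω * (e + (1 - e) * Real.exp (-(u * μs (m + 1)))) ∂ℙ := by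
            apply integral_congr_ae
            filter_upwards [hcondm] with ω hω
            rw [hω]
        _ = (∫ ω, S m ω ∂ℙ) * (e + (1 - e) * Real.exp (-(u * μs (m + 1)))) :=
            integral_mul_const _ _
        _ ≤ c ^ m * c := by
            have hd0 : 0 ≤ e + (1 - e) * Real.exp (-(u * μs (m + 1))) := by
              have := Real.exp_pos (-(u * μs (m + 1)))
              nlinarith
            have hintnn : 0 ≤ ∫ ω, S m ω ∂ℙ := integral_nonneg (hS0 m)
            exact mul_le_mul (ih hm') (hdc (m + 1) h1 hm) hd0 (by positivity)
        _ = c ^ (m + 1) := by ring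
  -- assemble: Markov inequality
  set A : Set Ω := {ω | ∑ n ∈ Finset.Icc 1 N, (if 0 < X n ω then (1 : ℝ) else 0) ≤ p * N / 2}
    with hAdef
  have hImeas : Measurable fun ω => ∑ n ∈ Finset.Icc 1 N, (if 0 < X n ω then (1 : ℝ) else 0) := by
    apply Finset.measurable_sum
    intro n hn
    rw [Finset.mem_Icc] at hn
    exact Measurable.ite
      (measurableSet_lt measurable_const ((hX n hn.1 hn.2).mono (hle n) le_rfl))
      measurable_const measurable_const
  have hA : MeasurableSet A := measurableSet_le hImeas measurable_const
  -- lower bound for S N on A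
  have hSexp : ∀ ω, S N ω = Real.exp (-t * ∑ n ∈ Finset.Icc 1 N,
      (if 0 < X n ω then (1 : ℝ) else 0)) := by
    intro ω
    rw [Finset.mul_sum, Real.exp_sum]
    apply Finset.prod_congr rfl
    intro n _
    simp only [hYdef, hedef]
    by_cases h : 0 < X n ω <;> simp [h]
  have hSlow : ∀ ω ∈ A, Real.exp (-t * (p * N / 2)) ≤ S N ω := by
    intro ω hω
    rw [hSexp ω]
    apply Real.exp_le_exp.mpr
    have hωA : ∑ n ∈ Finset.Icc 1 N, (if 0 < X n ω then (1 : ℝ) else 0) ≤ p * N / 2 := hω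
    nlinarith
  have hmarkov : (ℙ A).toReal * Real.exp (-t * (p * N / 2)) ≤ c ^ N := by
    have h1 : ∫ ω in A, Real.exp (-t * (p * N / 2)) ∂ℙ ≤ ∫ ω in A, S N ω ∂ℙ := by
      apply setIntegral_mono_on (integrableOn_const (measure_ne_top ℙ A))
        ((hSint N le_rfl).integrableOn) hA
      exact hSlow
    have h2 : ∫ ω in A, S N ω ∂ℙ ≤ ∫ ω, S N ω ∂ℙ :=
      setIntegral_le_integral (hSint N le_rfl) (ae_of_all _ (hS0 N))
    have h3 : ∫ ω in A, Real.exp (-t * (p * N / 2)) ∂ℙ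
        = (ℙ A).toReal * Real.exp (-t * (p * N / 2)) := by
      rw [setIntegral_const]; simp [smul_eq_mul, Measure.real]
    rw [← h3]
    exact le_trans h1 (le_trans h2 (key N le_rfl))
  -- c ≤ exp(-(p(1-e)))
  have hcexp : c ≤ Real.exp (-(p * (1 - e))) := by
    have := Real.add_one_le_exp (-(p * (1 - e)))
    simp only [hcdef]
    linarith
  have hquad : 1 - e ≥ t - t ^ 2 / 2 := by
    have := exp_neg_le_quadratic ht0.le
    rw [← hedef] at this
    linarith
  -- conclude by real inequalities
  have hfinal : (ℙ A).toReal ≤ Real.exp (-(p ^ 2 * N / 8)) := by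
    have hEpos : 0 < Real.exp (-t * (p * N / 2)) := Real.exp_pos _
    rw [← le_div_iff₀ hEpos] at hmarkov
    apply le_trans hmarkov
    rw [div_le_iff₀ hEpos, ← Real.exp_add]
    calc c ^ N ≤ Real.exp (-(p * (1 - e))) ^ N := pow_le_pow_left₀ hc0.le hcexp N
      _ = Real.exp ((N : ℝ) * -(p * (1 - e))) := (Real.exp_nat_mul _ N).symm
      _ ≤ Real.exp (-(p ^ 2 * N / 8) + -t * (p * N / 2)) := by
          apply Real.exp_le_exp.mpr
          have hN : (0:ℝ) ≤ (N : ℝ) := Nat.cast_nonneg N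
          have hstep : -(p * (1 - e)) ≤ -(p ^ 2 / 8) + -t * (p / 2) := by
            simp only [htdef]
            nlinarith [sq_nonneg p, mul_pos hp0 hp0]
          nlinarith [mul_le_mul_of_nonneg_left hstep hN]
  rw [ENNReal.le_ofReal_iff_toReal_le (measure_ne_top ℙ A) (Real.exp_nonneg _)]
  exact hfinal
end

section
/- Let d ≥ 2 and let c₄ > 10 be a real constant. There exists r₀ > 0 such that for every r ≥ r₀ and every line l ⊆ ℝ^d (i.e. l = {y + t·v : t ∈ ℝ} with |v| = 1) whose Euclidean distance to the origin is at most r + 1 (equivalently, whose cylinder Cyl(l) = l + B₁ intersects B_r), the set l ∩ (B_{c₄·r} \ B_{(c₄−1)·r}) has exactly two connected components, and each component has diameter at most 2r. -/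
open MeasureTheory Set
open scoped RealInnerProductSpace ENNReal NNReal

noncomputable section

/-- Auxiliary: comparison of nonnegative reals via squares. -/
lemma aux_le_of_sq_le_sq {x y : ℝ} (hx : 0 ≤ x) (hy : 0 ≤ y) (h : x ^ 2 ≤ y ^ 2) :
    x ≤ y := by nlinarith

lemma aux_lt_of_sq_lt_sq {x y : ℝ} (hx : 0 ≤ x) (hy : 0 ≤ y) (h : x ^ 2 < y ^ 2) :
    x < y := by nlinarith

/-- Auxiliary: if `F = S₁ ∪ S₂` with `S₁, S₂` separated by disjoint open sets and `S₁`
preconnected, then the connected component in `F` of any point of `S₁` is `S₁`. -/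
lemma aux_comp_eq {X : Type*} [TopologicalSpace X] {F S₁ S₂ U V : Set X}
    (hF : F = S₁ ∪ S₂) (hU : IsOpen U) (hV : IsOpen V)
    (h₁U : S₁ ⊆ U) (h₂V : S₂ ⊆ V) (hUV : Disjoint U V)
    (h₁ : IsPreconnected S₁) {z : X} (hz : z ∈ S₁) :
    connectedComponentIn F z = S₁ := by
  have hzF : z ∈ F := hF ▸ Or.inl hz
  apply Set.Subset.antisymm
  · set C := connectedComponentIn F z with hC
    have hCF : C ⊆ F := connectedComponentIn_subset F z
    have hCp : IsPreconnected C := isPreconnected_connectedComponentIn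
    have hCUV : C ⊆ U ∪ V := by
      intro w hw
      rcases hF ▸ hCF hw with h | h
      · exact Or.inl (h₁U h)
      · exact Or.inr (h₂V h)
    have hCV : ∀ w ∈ C, w ∉ V := by
      intro w hw hwV
      obtain ⟨x, -, hxU, hxV⟩ :=
        hCp U V hU hV hCUV ⟨z, mem_connectedComponentIn hzF, h₁U hz⟩ ⟨w, hw, hwV⟩
      exact Set.disjoint_left.mp hUV hxU hxV
    intro w hw
    rcases hF ▸ hCF hw with h | h
    · exact h
    · exact absurd (h₂V h) (hCV w hw)
  · exact h₁.subset_connectedComponentIn hz (hF ▸ Set.subset_union_left)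

set_option maxHeartbeats 1000000 in
/-- For `c₄ > 10` and all large `r`, any line within distance `r + 1` of the origin meets
the annulus `B_{c₄ r} \ B_{(c₄-1) r}` in exactly two connected components, each of diameter
at most `2r`. -/
theorem line_annulus_two_components (d : ℕ) (hd : 2 ≤ d) (c₄ : ℝ) (hc₄ : 10 < c₄) :
    ∃ r₀ : ℝ, 0 < r₀ ∧ ∀ r : ℝ, r₀ ≤ r →
      ∀ v y : Euc d, ‖v‖ = 1 →
        Metric.infDist (0 : Euc d) (lineOf (v, y)) ≤ r + 1 →
          ∃ S₁ S₂ : Set (Euc d),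
            (lineOf (v, y) ∩
                (Metric.closedBall 0 (c₄ * r) \ Metric.closedBall 0 ((c₄ - 1) * r)))
              = S₁ ∪ S₂ ∧
            S₁ ≠ S₂ ∧ S₁.Nonempty ∧ S₂.Nonempty ∧
            (∀ z ∈ S₁,
              connectedComponentIn
                (lineOf (v, y) ∩
                  (Metric.closedBall 0 (c₄ * r) \ Metric.closedBall 0 ((c₄ - 1) * r))) z
                = S₁) ∧
            (∀ z ∈ S₂,
              connectedComponentIn
                (lineOf (v, y) ∩
                  (Metric.closedBall 0 (c₄ * r) \ Metric.closedBall 0 ((c₄ - 1) * r))) z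
                = S₂) ∧
            Metric.diam S₁ ≤ 2 * r ∧ Metric.diam S₂ ≤ 2 * r := by
  refine ⟨1, one_pos, fun r hr v y hv hdist => ?_⟩
  have hr0 : (0:ℝ) < r := lt_of_lt_of_le one_pos hr
  set y' : Euc d := y - ⟪v, y⟫ • v with hy'
  have hvv : ⟪v, v⟫ = 1 := by
    rw [real_inner_self_eq_norm_mul_norm, hv, one_mul]
  have hvy' : ⟪v, y'⟫ = 0 := by
    rw [hy', inner_sub_right, real_inner_smul_right, hvv, mul_one, sub_self]
  set f : ℝ → Euc d := fun t => y' + t • v with hf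
  have hline : lineOf (v, y) = Set.range f := by
    ext z
    simp only [lineOf, Set.mem_setOf_eq, Set.mem_range, hf]
    constructor
    · rintro ⟨t, rfl⟩
      exact ⟨t + ⟪v, y⟫, by rw [hy']; module⟩
    · rintro ⟨t, rfl⟩
      exact ⟨t - ⟪v, y⟫, by rw [hy']; module⟩
  set a : ℝ := ‖y'‖ with hadef
  have ha0 : 0 ≤ a := norm_nonneg _
  have hnorm : ∀ t : ℝ, ‖f t‖ ^ 2 = a ^ 2 + t ^ 2 := by
    intro t
    simp only [hf]
    rw [norm_add_sq_real, real_inner_smul_right, real_inner_comm, hvy', norm_smul, hv]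
    simp [Real.norm_eq_abs, sq_abs, hadef]
  have ha : a ≤ r + 1 := by
    refine le_trans ?_ hdist
    by_contra hcon
    push_neg at hcon
    obtain ⟨w, hw, hwlt⟩ := (Metric.infDist_lt_iff ⟨y', by
        rw [hline]; exact ⟨0, by simp [hf]⟩⟩).mp hcon
    rw [hline] at hw
    obtain ⟨t, rfl⟩ := hw
    rw [dist_comm, dist_zero_right] at hwlt
    have h1 : ‖f t‖ ^ 2 = a ^ 2 + t ^ 2 := hnorm t
    nlinarith [norm_nonneg (f t), sq_nonneg t]
  set s : ℝ := Real.sqrt ((c₄ - 1) ^ 2 * r ^ 2 - a ^ 2) with hsdef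
  set T : ℝ := Real.sqrt (c₄ ^ 2 * r ^ 2 - a ^ 2) with hTdef
  have ha2 : a ^ 2 ≤ 4 * r ^ 2 := by nlinarith
  have hkey : 81 * r ^ 2 ≤ (c₄ - 1) ^ 2 * r ^ 2 := by
    nlinarith [mul_nonneg (mul_nonneg (show (0:ℝ) ≤ c₄ - 10 by linarith)
      (show (0:ℝ) ≤ c₄ + 8 by linarith)) (sq_nonneg r)]
  have hprod : (0:ℝ) < (2 * c₄ - 1) * (r * r) :=
    mul_pos (by linarith) (mul_pos hr0 hr0)
  have hsarg : 0 < (c₄ - 1) ^ 2 * r ^ 2 - a ^ 2 := by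
    nlinarith [mul_pos hr0 hr0]
  have hTarg : 0 < c₄ ^ 2 * r ^ 2 - a ^ 2 := by
    nlinarith [mul_pos hr0 hr0]
  have hs2 : s ^ 2 = (c₄ - 1) ^ 2 * r ^ 2 - a ^ 2 := Real.sq_sqrt hsarg.le
  have hT2 : T ^ 2 = c₄ ^ 2 * r ^ 2 - a ^ 2 := Real.sq_sqrt hTarg.le
  have hs0 : 0 < s := Real.sqrt_pos.mpr hsarg
  have hT0 : 0 ≤ T := Real.sqrt_nonneg _
  have hsT : s < T := aux_lt_of_sq_lt_sq hs0.le hT0 (by nlinarith [hprod])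
  set S₁ : Set (Euc d) := f '' Set.Ioc s T with hS₁def
  set S₂ : Set (Euc d) := f '' Set.Ico (-T) (-s) with hS₂def
  have hcr1 : (0:ℝ) ≤ (c₄ - 1) * r := mul_nonneg (by linarith) hr0.le
  have hcr2 : (0:ℝ) ≤ c₄ * r := mul_nonneg (by linarith) hr0.le
  have hmem : ∀ t : ℝ, f t ∈ Metric.closedBall (0 : Euc d) (c₄ * r) \
      Metric.closedBall 0 ((c₄ - 1) * r) ↔ s < |t| ∧ |t| ≤ T := by
    intro t
    have h2 := hnorm t
    have hta : |t| ^ 2 = t ^ 2 := sq_abs t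
    simp only [Set.mem_diff, Metric.mem_closedBall, dist_zero_right]
    constructor
    · rintro ⟨h1, h3⟩
      push_neg at h3
      have hb1 : ((c₄ - 1) * r) ^ 2 < ‖f t‖ ^ 2 :=
        pow_lt_pow_left₀ h3 hcr1 (by norm_num)
      have hb2 : ‖f t‖ ^ 2 ≤ (c₄ * r) ^ 2 := pow_le_pow_left₀ (norm_nonneg _) h1 2
      constructor
      · refine aux_lt_of_sq_lt_sq hs0.le (abs_nonneg t) ?_
        rw [hs2, hta]; nlinarith [hb1]
      · refine aux_le_of_sq_le_sq (abs_nonneg t) hT0 ?_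
        rw [hT2, hta]; nlinarith [hb2]
    · rintro ⟨h1, h3⟩
      have hb1 : s ^ 2 < t ^ 2 := by
        rw [← hta]; exact pow_lt_pow_left₀ h1 hs0.le (by norm_num)
      have hb2 : t ^ 2 ≤ T ^ 2 := by
        rw [← hta]; exact pow_le_pow_left₀ (abs_nonneg t) h3 2
      constructor
      · refine aux_le_of_sq_le_sq (norm_nonneg _) hcr2 ?_
        rw [h2]; nlinarith [hb2, hT2]
      · intro hcon
        have hb3 : ‖f t‖ ^ 2 ≤ ((c₄ - 1) * r) ^ 2 :=
          pow_le_pow_left₀ (norm_nonneg _) hcon 2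
        nlinarith [hs2, hb1, hb3, h2]
  have hmemF : lineOf (v, y) ∩
      (Metric.closedBall 0 (c₄ * r) \ Metric.closedBall 0 ((c₄ - 1) * r)) = S₁ ∪ S₂ := by
    ext z
    constructor
    · rintro ⟨hzl, hzA⟩
      rw [hline] at hzl
      obtain ⟨t, rfl⟩ := hzl
      obtain ⟨h1, h3⟩ := (hmem t).mp hzA
      rcases le_or_gt t 0 with h | h
      · right
        rw [abs_of_nonpos h] at h1 h3
        exact ⟨t, ⟨by linarith, by linarith⟩, rfl⟩
      · left
        rw [abs_of_pos h] at h1 h3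
        exact ⟨t, ⟨h1, h3⟩, rfl⟩
    · rintro (⟨t, ht, rfl⟩ | ⟨t, ht, rfl⟩)
      · refine ⟨by rw [hline]; exact ⟨t, rfl⟩, (hmem t).mpr ?_⟩
        rw [abs_of_pos (lt_trans hs0 ht.1)]
        exact ⟨ht.1, ht.2⟩
      · refine ⟨by rw [hline]; exact ⟨t, rfl⟩, (hmem t).mpr ?_⟩
        have htneg : t < 0 := lt_of_lt_of_le ht.2 (by linarith)
        rw [abs_of_neg htneg]
        exact ⟨by linarith [ht.2], by linarith [ht.1]⟩
  have hfc : Continuous f := continuous_const.add (continuous_id.smul continuous_const)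
  have hiso : Isometry f := by
    refine Isometry.of_dist_eq fun t₁ t₂ => ?_
    have hdiff : f t₁ - f t₂ = (t₁ - t₂) • v := by
      simp only [hf]
      module
    rw [dist_eq_norm, dist_eq_norm, hdiff, norm_smul, hv, mul_one]
  have hinner : ∀ t : ℝ, ⟪v, f t⟫ = t := by
    intro t
    simp only [hf]
    rw [inner_add_right, real_inner_smul_right, hvy', hvv, mul_one, zero_add]
  set U : Set (Euc d) := {z | 0 < ⟪v, z⟫} with hUdef
  set V : Set (Euc d) := {z | ⟪v, z⟫ < 0} with hVdef
  have hUopen : IsOpen U :=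
    isOpen_lt continuous_const (Continuous.inner continuous_const continuous_id)
  have hVopen : IsOpen V :=
    isOpen_lt (Continuous.inner continuous_const continuous_id) continuous_const
  have hUV : Disjoint U V := by
    rw [Set.disjoint_left]
    intro z h1 h2
    simp only [hUdef, hVdef, Set.mem_setOf_eq] at h1 h2
    linarith
  have hS₁U : S₁ ⊆ U := by
    rintro _ ⟨t, ht, rfl⟩
    simp only [hUdef, Set.mem_setOf_eq, hinner]
    linarith [ht.1]
  have hS₂V : S₂ ⊆ V := by
    rintro _ ⟨t, ht, rfl⟩
    simp only [hVdef, Set.mem_setOf_eq, hinner]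
    linarith [ht.2]
  have hS₁p : IsPreconnected S₁ := isPreconnected_Ioc.image f hfc.continuousOn
  have hS₂p : IsPreconnected S₂ := isPreconnected_Ico.image f hfc.continuousOn
  have hS₁ne : S₁.Nonempty := ⟨f T, ⟨T, ⟨hsT, le_refl T⟩, rfl⟩⟩
  have hS₂ne : S₂.Nonempty := ⟨f (-T), ⟨-T, ⟨le_refl _, by linarith⟩, rfl⟩⟩
  have hne : S₁ ≠ S₂ := by
    intro h
    have h1 : f T ∈ V := hS₂V (h ▸ ⟨T, ⟨hsT, le_refl T⟩, rfl⟩)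
    have h2 : f T ∈ U := hS₁U ⟨T, ⟨hsT, le_refl T⟩, rfl⟩
    exact Set.disjoint_left.mp hUV h2 h1
  have h12 : (0:ℝ) ≤ 12 * c₄ ^ 2 - 12 * c₄ - 73 := by nlinarith [sq_nonneg (c₄ - 10)]
  have h4s : (2 * c₄ - 5) * r ≤ 4 * s := by
    refine aux_le_of_sq_le_sq (mul_nonneg (by linarith) hr0.le) (by linarith) ?_
    nlinarith [hs2, ha2, mul_nonneg h12 (sq_nonneg r)]
  have hTle : T ≤ 2 * r + s := by
    refine aux_le_of_sq_le_sq hT0 (by positivity) ?_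
    nlinarith [hT2, hs2, mul_le_mul_of_nonneg_right h4s hr0.le]
  have hdiam₁ : Metric.diam S₁ ≤ 2 * r := by
    rw [hS₁def, hiso.diam_image, Real.diam_Ioc hsT.le]
    linarith
  have hdiam₂ : Metric.diam S₂ ≤ 2 * r := by
    rw [hS₂def, hiso.diam_image, Real.diam_Ico (by linarith : -T ≤ -s)]
    linarith
  exact ⟨S₁, S₂, hmemF, hne, hS₁ne, hS₂ne,
    fun z hz => aux_comp_eq hmemF hUopen hVopen hS₁U hS₂V hUV hS₁p hz,
    fun z hz => aux_comp_eq (hmemF.trans (Set.union_comm _ _)) hVopen hUopen hS₂V hS₁U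
      hUV.symm hS₂p hz,
    hdiam₁, hdiam₂⟩
end
end
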